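/- Let (M,g) be a Riemannian manifold admitting a virtual immersion Ω: TM → V with skew-symmetric second fundamental form. Then ∇R = 0, i.e., M is a locally symmetric space. -/

import Mathlib

private noncomputable def brk {E : Type*} [NormedAddCommGroup E] [NormedSpace ℝ E] (X Y : E → E) : E → E :=
  fun q => fderiv ℝ Y q (X q) - fderiv ℝ X q (Y q)

private noncomputable def covD {E V : Type*} [NormedAddCommGroup E] [NormedSpace ℝ E]
    [NormedAddCommGroup V] [NormedSpace ℝ V]
    (nabla : (E → E) → (E → E) → (E → E)) (II : (E → E) → (E → E) → E → V)
    (X Y Z : E → E) (p : E) : V :=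
  fderiv ℝ (fun q => II Y Z q) p (X p) - II (nabla X Y) Z p - II Y (nabla X Z) p

section Aux
variable {E F V : Type*} [NormedAddCommGroup E] [NormedSpace ℝ E]
  [NormedAddCommGroup F] [NormedSpace ℝ F]
  [NormedAddCommGroup V] [NormedSpace ℝ V]

private lemma cdiff {f : E → F} (hf : ContDiff ℝ (⊤ : ℕ∞) f) : Differentiable ℝ f :=
  hf.differentiable (by simp)

private lemma cdf {f : E → F} (hf : ContDiff ℝ (⊤ : ℕ∞) f) :
    ContDiff ℝ (⊤ : ℕ∞) (fun q => fderiv ℝ f q) :=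
  hf.fderiv_right (by exact_mod_cast le_top)

private lemma symm2 {f : E → F} (hf : ContDiff ℝ (⊤ : ℕ∞) f) (p a b : E) :
    fderiv ℝ (fderiv ℝ f) p a b = fderiv ℝ (fderiv ℝ f) p b a :=
  (hf.contDiffAt (x := p)).isSymmSndFDerivAt (n := (⊤:ℕ∞)) (by simp only [minSmoothness_of_isRCLikeNormedField]; norm_cast) a b

/-- product rule for a clm-valued function applied to a vector field -/
private lemma fd_apply {c : E → (E →L[ℝ] F)} {u : E → E} (hc : ContDiff ℝ (⊤ : ℕ∞) c)
    (hu : ContDiff ℝ (⊤ : ℕ∞) u) (p v : E) :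
    fderiv ℝ (fun q => c q (u q)) p v = c p (fderiv ℝ u p v) + fderiv ℝ c p v (u p) := by
  rw [fderiv_clm_apply (cdiff hc p) (cdiff hu p)]
  simp

/-- expansion of the derivative of `q ↦ (fderiv f q) (X q)` -/
private lemma fd_fd {f : E → F} {X : E → E} (hf : ContDiff ℝ (⊤ : ℕ∞) f)
    (hX : ContDiff ℝ (⊤ : ℕ∞) X) (p v : E) :
    fderiv ℝ (fun q => fderiv ℝ f q (X q)) p v
      = fderiv ℝ f p (fderiv ℝ X p v) + fderiv ℝ (fderiv ℝ f) p v (X p) :=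
  fd_apply (cdf hf) hX p v

/-- flatness/commutation: second derivatives commute -/
private lemma flat_comm {f : E → F} {X Y : E → E} (hf : ContDiff ℝ (⊤ : ℕ∞) f)
    (hX : ContDiff ℝ (⊤ : ℕ∞) X) (hY : ContDiff ℝ (⊤ : ℕ∞) Y) (p : E) :
    fderiv ℝ (fun q => fderiv ℝ f q (X q)) p (Y p)
      - fderiv ℝ (fun q => fderiv ℝ f q (Y q)) p (X p)
      = fderiv ℝ f p (fderiv ℝ X p (Y p) - fderiv ℝ Y p (X p)) := by
  rw [fd_fd hf hX p (Y p), fd_fd hf hY p (X p), symm2 hf p (Y p) (X p), map_sub]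
  abel

private lemma smooth_brk {X Y : E → E} (hX : ContDiff ℝ (⊤ : ℕ∞) X)
    (hY : ContDiff ℝ (⊤ : ℕ∞) Y) : ContDiff ℝ (⊤ : ℕ∞) (brk X Y) :=
  ((cdf hY).clm_apply hX).sub ((cdf hX).clm_apply hY)

/-- the Jacobi identity for the commutator bracket of vector fields -/
private lemma jacobi {X Y Z : E → E} (hX : ContDiff ℝ (⊤ : ℕ∞) X)
    (hY : ContDiff ℝ (⊤ : ℕ∞) Y) (hZ : ContDiff ℝ (⊤ : ℕ∞) Z) (p : E) :
    brk (brk X Y) Z p + brk (brk Y Z) X p + brk (brk Z X) Y p = 0 := by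
  have hfd : ∀ (U W : E → E), ContDiff ℝ (⊤ : ℕ∞) U → ContDiff ℝ (⊤ : ℕ∞) W →
      fderiv ℝ (brk U W) p = fderiv ℝ (fun q => fderiv ℝ W q (U q)) p
        - fderiv ℝ (fun q => fderiv ℝ U q (W q)) p := by
    intro U W hU hW
    exact fderiv_sub (cdiff ((cdf hW).clm_apply hU) p) (cdiff ((cdf hU).clm_apply hW) p)
  show fderiv ℝ Z p (brk X Y p) - fderiv ℝ (brk X Y) p (Z p)
      + (fderiv ℝ X p (brk Y Z p) - fderiv ℝ (brk Y Z) p (X p))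
      + (fderiv ℝ Y p (brk Z X p) - fderiv ℝ (brk Z X) p (Y p)) = 0
  rw [hfd X Y hX hY, hfd Y Z hY hZ, hfd Z X hZ hX]
  simp only [ContinuousLinearMap.sub_apply]
  rw [fd_fd hY hX p (Z p), fd_fd hX hY p (Z p), fd_fd hZ hY p (X p), fd_fd hY hZ p (X p),
    fd_fd hX hZ p (Y p), fd_fd hZ hX p (Y p)]
  show fderiv ℝ Z p (fderiv ℝ Y p (X p) - fderiv ℝ X p (Y p)) - _
      + (fderiv ℝ X p (fderiv ℝ Z p (Y p) - fderiv ℝ Y p (Z p)) - _)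
      + (fderiv ℝ Y p (fderiv ℝ X p (Z p) - fderiv ℝ Z p (X p)) - _) = 0
  rw [map_sub, map_sub, map_sub, symm2 hY p (Z p) (X p), symm2 hZ p (X p) (Y p),
    symm2 hX p (Y p) (Z p)]
  abel
end Aux

section Aux2
variable {E V : Type*} [NormedAddCommGroup E] [NormedSpace ℝ E]
  [NormedAddCommGroup V] [NormedSpace ℝ V] [FiniteDimensional ℝ V]

private noncomputable def toCLM2 (B : V →ₗ[ℝ] V →ₗ[ℝ] ℝ) : V →L[ℝ] V →L[ℝ] ℝ :=
  LinearMap.toContinuousLinearMap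
    { toFun := fun u => LinearMap.toContinuousLinearMap (B u),
      map_add' := by intro a b; ext v; simp,
      map_smul' := by intro c a; ext v; simp }

private lemma toCLM2_apply (B : V →ₗ[ℝ] V →ₗ[ℝ] ℝ) (x y : V) : toCLM2 B x y = B x y := rfl

private lemma diffAt_B (B : V →ₗ[ℝ] V →ₗ[ℝ] ℝ) {f h : E → V} {p : E}
    (hf : DifferentiableAt ℝ f p) (hh : DifferentiableAt ℝ h p) :
    DifferentiableAt ℝ (fun q => B (f q) (h q)) p := by
  have : (fun q => B (f q) (h q)) = fun q => (toCLM2 B) (f q) (h q) := rfl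
  rw [this]
  exact ((toCLM2 B).hasFDerivAt_of_bilinear hf.hasFDerivAt hh.hasFDerivAt).differentiableAt

private lemma fderiv_B (B : V →ₗ[ℝ] V →ₗ[ℝ] ℝ) {f h : E → V} {p : E}
    (hf : DifferentiableAt ℝ f p) (hh : DifferentiableAt ℝ h p) (v : E) :
    fderiv ℝ (fun q => B (f q) (h q)) p v
      = B (fderiv ℝ f p v) (h p) + B (f p) (fderiv ℝ h p v) := by
  have : (fun q => B (f q) (h q)) = fun q => (toCLM2 B) (f q) (h q) := rfl
  rw [this, (toCLM2 B).fderiv_of_bilinear hf hh]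
  simp [ContinuousLinearMap.precompR, ContinuousLinearMap.precompL, toCLM2_apply]
  abel

private lemma cd_B (B : V →ₗ[ℝ] V →ₗ[ℝ] ℝ) {f h : E → V}
    (hf : ContDiff ℝ (⊤:ℕ∞) f) (hh : ContDiff ℝ (⊤:ℕ∞) h) :
    ContDiff ℝ (⊤:ℕ∞) (fun q => B (f q) (h q)) := by
  have : (fun q => B (f q) (h q)) = fun q => (toCLM2 B) (f q) (h q) := rfl
  rw [this]
  exact (((toCLM2 B).contDiff).comp hf).clm_apply hh
end Aux2

theorem stmt_17 {E V : Type*}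
    [NormedAddCommGroup E] [NormedSpace ℝ E] [FiniteDimensional ℝ E]
    [NormedAddCommGroup V] [NormedSpace ℝ V] [FiniteDimensional ℝ V]
    -- the nondegenerate symmetric bilinear form on V
    (B : V →ₗ[ℝ] V →ₗ[ℝ] ℝ) (hBsymm : ∀ u v : V, B u v = B v u)
    (hBnd : ∀ u : V, (∀ v : V, B u v = 0) → u = 0)
    -- the Riemannian metric g
    (g : E → E →ₗ[ℝ] E →ₗ[ℝ] ℝ) (hgsymm : ∀ p (v w : E), g p v w = g p w v)
    (hgpos : ∀ p (v : E), v ≠ 0 → 0 < g p v v)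
    -- the V-valued one-form Ω, satisfying condition (a)
    (Ω : E → (E →L[ℝ] V)) (hΩ : ContDiff ℝ (⊤ : ℕ∞) Ω)
    (ha : ∀ p (v w : E), B (Ω p v) (Ω p w) = g p v w)
    -- condition (b): ⟨dΩ(X,Y), Ω(Z)⟩ = 0
    (hb : ∀ X Y : E → E, ContDiff ℝ (⊤ : ℕ∞) X → ContDiff ℝ (⊤ : ℕ∞) Y → ∀ p (z : E),
        B (fderiv ℝ (fun q => Ω q (Y q)) p (X p)
            - fderiv ℝ (fun q => Ω q (X q)) p (Y p)
            - Ω p (fderiv ℝ Y p (X p) - fderiv ℝ X p (Y p))) (Ω p z) = 0)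
    -- the Levi-Civita connection ∇ of g: torsion-free and metric
    (nabla : (E → E) → (E → E) → (E → E))
    (hns : ∀ X Y : E → E, ContDiff ℝ (⊤ : ℕ∞) X → ContDiff ℝ (⊤ : ℕ∞) Y →
      ContDiff ℝ (⊤ : ℕ∞) (nabla X Y))
    (htf : ∀ X Y : E → E, ContDiff ℝ (⊤ : ℕ∞) X → ContDiff ℝ (⊤ : ℕ∞) Y →
      ∀ p, nabla X Y p - nabla Y X p = fderiv ℝ Y p (X p) - fderiv ℝ X p (Y p))
    (hmetric : ∀ X Y Z : E → E, ContDiff ℝ (⊤ : ℕ∞) X → ContDiff ℝ (⊤ : ℕ∞) Y →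
      ContDiff ℝ (⊤ : ℕ∞) Z → ∀ p,
      fderiv ℝ (fun q => g q (Y q) (Z q)) p (X p)
        = g p (nabla X Y p) (Z p) + g p (Y p) (nabla X Z p))
    -- the second fundamental form II(X,Y) = D_X(Ω(Y)) − Ω(∇_X Y)
    (II : (E → E) → (E → E) → E → V)
    (hII : ∀ (X Y : E → E) p,
      II X Y p = fderiv ℝ (fun q => Ω q (Y q)) p (X p) - Ω p (nabla X Y p))
    -- II is skew-symmetric
    (hskew : ∀ X Y : E → E, ContDiff ℝ (⊤ : ℕ∞) X → ContDiff ℝ (⊤ : ℕ∞) Y →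
      ∀ p, II X Y p = - II Y X p)
    -- the curvature tensor R(X,Y)Z = ∇_Y ∇_X Z − ∇_X ∇_Y Z + ∇_{[X,Y]} Z
    (Rt : (E → E) → (E → E) → (E → E) → E → E)
    (hRt : ∀ (X Y Z : E → E) p,
      Rt X Y Z p = nabla Y (nabla X Z) p - nabla X (nabla Y Z) p
        + nabla (fun q => fderiv ℝ Y q (X q) - fderiv ℝ X q (Y q)) Z p) :
    -- ∇R = 0: (∇_X R)(Y,Z)W = ∇_X(R(Y,Z)W) − R(∇_X Y,Z)W − R(Y,∇_X Z)W − R(Y,Z)(∇_X W) = 0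
    ∀ X Y Z W : E → E, ContDiff ℝ (⊤ : ℕ∞) X → ContDiff ℝ (⊤ : ℕ∞) Y →
      ContDiff ℝ (⊤ : ℕ∞) Z → ContDiff ℝ (⊤ : ℕ∞) W → ∀ p,
      nabla X (fun q => Rt Y Z W q) p - Rt (nabla X Y) Z W p
        - Rt Y (nabla X Z) W p - Rt Y Z (nabla X W) p = 0 := by
  -- ===== smoothness infrastructure =====
  have sΩZ : ∀ (Z : E → E), ContDiff ℝ (⊤:ℕ∞) Z → ContDiff ℝ (⊤:ℕ∞) (fun q => Ω q (Z q)) :=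
    fun Z hZ => hΩ.clm_apply hZ
  have sII : ∀ (X Y : E → E), ContDiff ℝ (⊤:ℕ∞) X → ContDiff ℝ (⊤:ℕ∞) Y →
      ContDiff ℝ (⊤:ℕ∞) (fun q => II X Y q) := by
    intro X Y hX hY
    have h : (fun q => II X Y q) = fun q =>
        fderiv ℝ (fun r => Ω r (Y r)) q (X q) - Ω q (nabla X Y q) := funext (hII X Y)
    rw [h]
    exact ((cdf (sΩZ Y hY)).clm_apply hX).sub (sΩZ (nabla X Y) (hns X Y hX hY))
  have sRt : ∀ (X Y Z : E → E), ContDiff ℝ (⊤:ℕ∞) X → ContDiff ℝ (⊤:ℕ∞) Y →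
      ContDiff ℝ (⊤:ℕ∞) Z → ContDiff ℝ (⊤:ℕ∞) (fun q => Rt X Y Z q) := by
    intro X Y Z hX hY hZ
    have h : (fun q => Rt X Y Z q) = fun q => nabla Y (nabla X Z) q - nabla X (nabla Y Z) q
        + nabla (brk X Y) Z q := funext (fun q => hRt X Y Z q)
    rw [h]
    exact ((hns Y _ hY (hns X Z hX hZ)).sub (hns X _ hX (hns Y Z hY hZ))).add
      (hns (brk X Y) Z (smooth_brk hX hY) hZ)
  -- ===== algebraic basics =====
  have hinj : ∀ (p : E) (v : E), Ω p v = 0 → v = 0 := by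
    intro p v hv
    by_contra h
    have h2 := hgpos p v h
    rw [← ha p v v, hv] at h2
    simp at h2
  have hcancel : ∀ (a b : V), (2:ℝ) • a = (2:ℝ) • b → a = b :=
    fun a b h => smul_right_injective V two_ne_zero h
  -- ===== II formula from skewness =====
  have hNf : ∀ (X Y : E → E), ContDiff ℝ (⊤:ℕ∞) X → ContDiff ℝ (⊤:ℕ∞) Y → ∀ p,
      (2:ℝ) • II X Y p
      = fderiv ℝ (fun q => Ω q (Y q)) p (X p) - fderiv ℝ (fun q => Ω q (X q)) p (Y p)
        - Ω p (brk X Y p) := by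
    intro X Y hX hY p
    have h1 := hII X Y p
    have h2 := hII Y X p
    have h4 := hskew X Y hX hY p
    have h3 : Ω p (nabla X Y p) - Ω p (nabla Y X p) = Ω p (brk X Y p) := by
      rw [← map_sub]
      exact congrArg (Ω p) (htf X Y hX hY p)
    linear_combination (norm := module) h1 - h2 + h4 - h3
  -- ===== normality of II =====
  have hN : ∀ (X Y : E → E), ContDiff ℝ (⊤:ℕ∞) X → ContDiff ℝ (⊤:ℕ∞) Y → ∀ p (z : E),
      B (II X Y p) (Ω p z) = 0 := by
    intro X Y hX hY p z
    have h0 := hb X Y hX hY p z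
    have h1 : (2:ℝ) • II X Y p = fderiv ℝ (fun q => Ω q (Y q)) p (X p)
        - fderiv ℝ (fun q => Ω q (X q)) p (Y p)
        - Ω p (fderiv ℝ Y p (X p) - fderiv ℝ X p (Y p)) := hNf X Y hX hY p
    rw [← h1] at h0
    simp only [map_smul, LinearMap.smul_apply, smul_eq_mul] at h0
    linarith
  -- ===== fundamental equation =====
  have hE1 : ∀ (X Z : E → E), ContDiff ℝ (⊤:ℕ∞) X → ContDiff ℝ (⊤:ℕ∞) Z → ∀ p,
      fderiv ℝ (fun q => Ω q (Z q)) p (X p) = Ω p (nabla X Z p) + II X Z p := by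
    intro X Z hX hZ p
    rw [hII X Z p]
    abel
  -- ===== nabla formula =====
  have hNab : ∀ (X Z : E → E), ContDiff ℝ (⊤:ℕ∞) X → ContDiff ℝ (⊤:ℕ∞) Z → ∀ p,
      (2:ℝ) • Ω p (nabla X Z p)
      = fderiv ℝ (fun q => Ω q (Z q)) p (X p) + fderiv ℝ (fun q => Ω q (X q)) p (Z p)
        + Ω p (brk X Z p) := by
    intro X Z hX hZ p
    have h1 := hE1 X Z hX hZ p
    have h2 := hNf X Z hX hZ p
    linear_combination (norm := module) (-2:ℝ) • h1 - h2
  -- ===== linearity of nabla =====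
  have nb1 : ∀ (X₁ X₂ Z : E → E), ContDiff ℝ (⊤:ℕ∞) X₁ → ContDiff ℝ (⊤:ℕ∞) X₂ →
      ContDiff ℝ (⊤:ℕ∞) Z → ∀ p,
      nabla (fun q => X₁ q - X₂ q) Z p = nabla X₁ Z p - nabla X₂ Z p := by
    intro X₁ X₂ Z h1 h2 hZ p
    have A := hNab (fun q => X₁ q - X₂ q) Z (h1.sub h2) hZ p
    have eΩ : (fun q => Ω q ((fun r => X₁ r - X₂ r) q)) =
        (fun q => Ω q (X₁ q) - Ω q (X₂ q)) := funext fun q => by simp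
    rw [eΩ] at A
    rw [fderiv_fun_sub (cdiff (sΩZ X₁ h1) p) (cdiff (sΩZ X₂ h2) p)] at A
    have ebrk : brk (fun q => X₁ q - X₂ q) Z p = brk X₁ Z p - brk X₂ Z p := by
      simp only [brk]
      rw [fderiv_fun_sub (cdiff h1 p) (cdiff h2 p)]
      simp only [map_sub, ContinuousLinearMap.sub_apply]
      abel
    rw [ebrk] at A
    have B1 := hNab X₁ Z h1 hZ p
    have B2 := hNab X₂ Z h2 hZ p
    have key : Ω p (nabla (fun q => X₁ q - X₂ q) Z p)
        = Ω p (nabla X₁ Z p) - Ω p (nabla X₂ Z p) := by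
      apply hcancel
      simp only [ContinuousLinearMap.sub_apply, map_sub] at A ⊢
      linear_combination (norm := module) A - B1 + B2
    have : Ω p (nabla (fun q => X₁ q - X₂ q) Z p - (nabla X₁ Z p - nabla X₂ Z p)) = 0 := by
      rw [map_sub, map_sub, key]
      abel
    have h0 := hinj p _ this
    exact sub_eq_zero.mp h0
  have nb2 : ∀ (X Z₁ Z₂ : E → E), ContDiff ℝ (⊤:ℕ∞) X → ContDiff ℝ (⊤:ℕ∞) Z₁ →
      ContDiff ℝ (⊤:ℕ∞) Z₂ → ∀ p,
      nabla X (fun q => Z₁ q - Z₂ q) p = nabla X Z₁ p - nabla X Z₂ p := by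
    intro X Z₁ Z₂ hX h1 h2 p
    have A := hNab X (fun q => Z₁ q - Z₂ q) hX (h1.sub h2) p
    have eΩ : (fun q => Ω q ((fun r => Z₁ r - Z₂ r) q)) =
        (fun q => Ω q (Z₁ q) - Ω q (Z₂ q)) := funext fun q => by simp
    rw [eΩ] at A
    rw [fderiv_fun_sub (cdiff (sΩZ Z₁ h1) p) (cdiff (sΩZ Z₂ h2) p)] at A
    have ebrk : brk X (fun q => Z₁ q - Z₂ q) p = brk X Z₁ p - brk X Z₂ p := by
      simp only [brk]
      rw [fderiv_fun_sub (cdiff h1 p) (cdiff h2 p)]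
      simp only [map_sub, ContinuousLinearMap.sub_apply]
      abel
    rw [ebrk] at A
    have B1 := hNab X Z₁ hX h1 p
    have B2 := hNab X Z₂ hX h2 p
    have key : Ω p (nabla X (fun q => Z₁ q - Z₂ q) p)
        = Ω p (nabla X Z₁ p) - Ω p (nabla X Z₂ p) := by
      apply hcancel
      simp only [ContinuousLinearMap.sub_apply, map_sub] at A ⊢
      linear_combination (norm := module) A - B1 + B2
    have : Ω p (nabla X (fun q => Z₁ q - Z₂ q) p - (nabla X Z₁ p - nabla X Z₂ p)) = 0 := by
      rw [map_sub, map_sub, key]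
      abel
    exact sub_eq_zero.mp (hinj p _ this)
  have nbneg2 : ∀ (X Z : E → E), ContDiff ℝ (⊤:ℕ∞) X → ContDiff ℝ (⊤:ℕ∞) Z → ∀ p,
      nabla X (fun q => -(Z q)) p = - nabla X Z p := by
    intro X Z hX hZ p
    have A := hNab X (fun q => -(Z q)) hX hZ.neg p
    have eΩ : (fun q => Ω q ((fun r => -(Z r)) q)) = (fun q => -(Ω q (Z q))) :=
      funext fun q => by simp
    rw [eΩ, fderiv_fun_neg] at A
    have ebrk : brk X (fun q => -(Z q)) p = - brk X Z p := by
      simp only [brk]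
      rw [fderiv_fun_neg]
      simp only [map_neg, ContinuousLinearMap.neg_apply]
      abel
    rw [ebrk] at A
    have B1 := hNab X Z hX hZ p
    have key : Ω p (nabla X (fun q => -(Z q)) p) = - Ω p (nabla X Z p) := by
      apply hcancel
      simp only [ContinuousLinearMap.neg_apply, map_neg] at A ⊢
      linear_combination (norm := module) A + B1
    have : Ω p (nabla X (fun q => -(Z q)) p - (- nabla X Z p)) = 0 := by
      rw [map_sub, map_neg, key]
      abel
    exact sub_eq_zero.mp (hinj p _ this)
  -- ===== first Bianchi identity =====
  have hB1 : ∀ (X Y Z : E → E), ContDiff ℝ (⊤:ℕ∞) X → ContDiff ℝ (⊤:ℕ∞) Y →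
      ContDiff ℝ (⊤:ℕ∞) Z → ∀ p, Rt X Y Z p + Rt Y Z X p + Rt Z X Y p = 0 := by
    intro X Y Z hX hY hZ p
    have r1 : Rt X Y Z p = nabla Y (nabla X Z) p - nabla X (nabla Y Z) p
        + nabla (brk X Y) Z p := hRt X Y Z p
    have r2 : Rt Y Z X p = nabla Z (nabla Y X) p - nabla Y (nabla Z X) p
        + nabla (brk Y Z) X p := hRt Y Z X p
    have r3 : Rt Z X Y p = nabla X (nabla Z Y) p - nabla Z (nabla X Y) p
        + nabla (brk Z X) Y p := hRt Z X Y p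
    have fe : ∀ (U W : E → E), ContDiff ℝ (⊤:ℕ∞) U → ContDiff ℝ (⊤:ℕ∞) W →
        brk U W = fun q => nabla U W q - nabla W U q :=
      fun U W hU hW => funext fun q => (htf U W hU hW q).symm
    have eY : nabla Y (brk X Z) p = nabla Y (nabla X Z) p - nabla Y (nabla Z X) p := by
      rw [fe X Z hX hZ]
      exact nb2 Y (nabla X Z) (nabla Z X) hY (hns X Z hX hZ) (hns Z X hZ hX) p
    have eZ : nabla Z (brk Y X) p = nabla Z (nabla Y X) p - nabla Z (nabla X Y) p := by
      rw [fe Y X hY hX]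
      exact nb2 Z (nabla Y X) (nabla X Y) hZ (hns Y X hY hX) (hns X Y hX hY) p
    have eX : nabla X (brk Z Y) p = nabla X (nabla Z Y) p - nabla X (nabla Y Z) p := by
      rw [fe Z Y hZ hY]
      exact nb2 X (nabla Z Y) (nabla Y Z) hX (hns Z Y hZ hY) (hns Y Z hY hZ) p
    have nY : nabla Y (brk X Z) p = - nabla Y (brk Z X) p := by
      have e : brk X Z = fun q => -(brk Z X q) := funext fun q => by
        simp only [brk]; abel
      rw [e]
      exact nbneg2 Y (brk Z X) hY (smooth_brk hZ hX) p
    have nZ : nabla Z (brk Y X) p = - nabla Z (brk X Y) p := by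
      have e : brk Y X = fun q => -(brk X Y q) := funext fun q => by
        simp only [brk]; abel
      rw [e]
      exact nbneg2 Z (brk X Y) hZ (smooth_brk hX hY) p
    have nX : nabla X (brk Z Y) p = - nabla X (brk Y Z) p := by
      have e : brk Z Y = fun q => -(brk Y Z q) := funext fun q => by
        simp only [brk]; abel
      rw [e]
      exact nbneg2 X (brk Y Z) hX (smooth_brk hY hZ) p
    have t1 : nabla (brk X Y) Z p - nabla Z (brk X Y) p = brk (brk X Y) Z p :=
      htf (brk X Y) Z (smooth_brk hX hY) hZ p
    have t2 : nabla (brk Y Z) X p - nabla X (brk Y Z) p = brk (brk Y Z) X p :=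
      htf (brk Y Z) X (smooth_brk hY hZ) hX p
    have t3 : nabla (brk Z X) Y p - nabla Y (brk Z X) p = brk (brk Z X) Y p :=
      htf (brk Z X) Y (smooth_brk hZ hX) hY p
    have jac := jacobi hX hY hZ p
    linear_combination (norm := module) r1 + r2 + r3 - eY - eZ - eX + nY + nZ + nX
      + t1 + t2 + t3 + jac
  -- ===== Gauss-Codazzi from flatness =====
  have hComm : ∀ (X Y Z : E → E), ContDiff ℝ (⊤:ℕ∞) X → ContDiff ℝ (⊤:ℕ∞) Y →
      ContDiff ℝ (⊤:ℕ∞) Z → ∀ p,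
      Ω p (Rt X Y Z p) = fderiv ℝ (fun q => II Y Z q) p (X p)
        - fderiv ℝ (fun q => II X Z q) p (Y p)
        + II X (nabla Y Z) p - II Y (nabla X Z) p - II (brk X Y) Z p := by
    intro X Y Z hX hY hZ p
    have d1 : fderiv ℝ (fun q => fderiv ℝ (fun r => Ω r (Z r)) q (X q)) p (Y p)
        = Ω p (nabla Y (nabla X Z) p) + II Y (nabla X Z) p
          + fderiv ℝ (fun q => II X Z q) p (Y p) := by
      have e : (fun q => fderiv ℝ (fun r => Ω r (Z r)) q (X q))
          = fun q => Ω q (nabla X Z q) + II X Z q := funext fun q => hE1 X Z hX hZ q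
      rw [e, fderiv_fun_add (cdiff (sΩZ (nabla X Z) (hns X Z hX hZ)) p) (cdiff (sII X Z hX hZ) p),
        ContinuousLinearMap.add_apply, hE1 Y (nabla X Z) hY (hns X Z hX hZ) p]
    have d2 : fderiv ℝ (fun q => fderiv ℝ (fun r => Ω r (Z r)) q (Y q)) p (X p)
        = Ω p (nabla X (nabla Y Z) p) + II X (nabla Y Z) p
          + fderiv ℝ (fun q => II Y Z q) p (X p) := by
      have e : (fun q => fderiv ℝ (fun r => Ω r (Z r)) q (Y q))
          = fun q => Ω q (nabla Y Z q) + II Y Z q := funext fun q => hE1 Y Z hY hZ q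
      rw [e, fderiv_fun_add (cdiff (sΩZ (nabla Y Z) (hns Y Z hY hZ)) p) (cdiff (sII Y Z hY hZ) p),
        ContinuousLinearMap.add_apply, hE1 X (nabla Y Z) hX (hns Y Z hY hZ) p]
    have fc := flat_comm (sΩZ Z hZ) hX hY p
    have e4 : fderiv ℝ (fun q => Ω q (Z q)) p (fderiv ℝ X p (Y p) - fderiv ℝ Y p (X p))
        = -(Ω p (nabla (brk X Y) Z p) + II (brk X Y) Z p) := by
      have e5 := hE1 (brk X Y) Z (smooth_brk hX hY) hZ p
      have e6 : fderiv ℝ X p (Y p) - fderiv ℝ Y p (X p) = -(brk X Y p) := by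
        simp only [brk]; abel
      rw [e6, map_neg, e5]
    have r : Ω p (Rt X Y Z p) = Ω p (nabla Y (nabla X Z) p) - Ω p (nabla X (nabla Y Z) p)
        + Ω p (nabla (brk X Y) Z p) := by
      rw [show Rt X Y Z p = nabla Y (nabla X Z) p - nabla X (nabla Y Z) p
        + nabla (brk X Y) Z p from hRt X Y Z p, map_add, map_sub]
    linear_combination (norm := module) r - d1 + d2 + fc + e4
  -- ===== covariant derivative of II: symmetrized version =====
  have hE2' : ∀ (X Y Z : E → E), ContDiff ℝ (⊤:ℕ∞) X → ContDiff ℝ (⊤:ℕ∞) Y →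
      ContDiff ℝ (⊤:ℕ∞) Z → ∀ p,
      Ω p (Rt X Y Z p) = covD nabla II X Y Z p - covD nabla II Y X Z p := by
    intro X Y Z hX hY hZ p
    have hc := hComm X Y Z hX hY hZ p
    have hf1 : II (brk X Y) Z p = II (nabla X Y) Z p - II (nabla Y X) Z p := by
      rw [hII (brk X Y) Z p, hII (nabla X Y) Z p, hII (nabla Y X) Z p]
      have e : brk X Y = fun q => nabla X Y q - nabla Y X q :=
        funext fun q => (htf X Y hX hY q).symm
      have e2 : brk X Y p = nabla X Y p - nabla Y X p := (htf X Y hX hY p).symm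
      have e3 : nabla (brk X Y) Z p = nabla (nabla X Y) Z p - nabla (nabla Y X) Z p := by
        rw [e]
        exact nb1 (nabla X Y) (nabla Y X) Z (hns X Y hX hY) (hns Y X hY hX) hZ p
      rw [e2, e3, map_sub, map_sub]
      abel
    simp only [covD]
    linear_combination (norm := module) hc - hf1
  -- ===== skew-symmetry of covD in last two arguments =====
  have hDskew : ∀ (X Y Z : E → E), ContDiff ℝ (⊤:ℕ∞) X → ContDiff ℝ (⊤:ℕ∞) Y →
      ContDiff ℝ (⊤:ℕ∞) Z → ∀ p,
      covD nabla II X Y Z p = - covD nabla II X Z Y p := by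
    intro X Y Z hX hY hZ p
    simp only [covD]
    have e : (fun q => II Y Z q) = fun q => -(II Z Y q) :=
      funext fun q => hskew Y Z hY hZ q
    rw [e, fderiv_fun_neg, ContinuousLinearMap.neg_apply,
      hskew (nabla X Y) Z (hns X Y hX hY) hZ p, hskew Y (nabla X Z) hY (hns X Z hX hZ) p]
    abel
  -- ===== the key identity: covD is tangential =====
  have hE3 : ∀ (X Y Z : E → E), ContDiff ℝ (⊤:ℕ∞) X → ContDiff ℝ (⊤:ℕ∞) Y →
      ContDiff ℝ (⊤:ℕ∞) Z → ∀ p,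
      covD nabla II X Y Z p = - Ω p (Rt Y Z X p) := by
    intro X Y Z hX hY hZ p
    have e1 := hE2' X Y Z hX hY hZ p
    have e2 := hE2' Y Z X hY hZ hX p
    have e3 := hE2' Z X Y hZ hX hY p
    have s1 := hDskew Y X Z hY hX hZ p
    have s2 := hDskew Z Y X hZ hY hX p
    have s3 := hDskew X Z Y hX hZ hY p
    have bb : Ω p (Rt X Y Z p) + Ω p (Rt Y Z X p) + Ω p (Rt Z X Y p) = 0 := by
      rw [← map_add, ← map_add, hB1 X Y Z hX hY hZ p, map_zero]
    rw [e1, e2, e3] at bb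
    rw [s1, s2, s3] at bb
    linear_combination (norm := module) ((1:ℝ)/2) • bb + e2 - s2
  -- ===== the Gauss equation =====
  have hGauss : ∀ (X Y Z U : E → E), ContDiff ℝ (⊤:ℕ∞) X → ContDiff ℝ (⊤:ℕ∞) Y →
      ContDiff ℝ (⊤:ℕ∞) Z → ContDiff ℝ (⊤:ℕ∞) U → ∀ p,
      g p (Rt Y Z X p) (U p) = B (II Y Z p) (II X U p) := by
    intro X Y Z U hX hY hZ hU p
    have hφ : (fun q => B (II Y Z q) (Ω q (U q))) = fun _ => (0:ℝ) :=
      funext fun q => hN Y Z hY hZ q (U q)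
    have hz : fderiv ℝ (fun q => B (II Y Z q) (Ω q (U q))) p (X p) = 0 := by
      rw [hφ, fderiv_fun_const]
      simp
    have hprod := fderiv_B B (cdiff (sII Y Z hY hZ) p) (cdiff (sΩZ U hU) p) (X p)
    rw [hz] at hprod
    rw [hE1 X U hX hU p] at hprod
    have hD : fderiv ℝ (fun q => II Y Z q) p (X p)
        = - Ω p (Rt Y Z X p) + II (nabla X Y) Z p + II Y (nabla X Z) p := by
      have h := hE3 X Y Z hX hY hZ p
      simp only [covD] at h
      linear_combination (norm := module) h
    rw [hD] at hprod
    simp only [map_add, map_neg, LinearMap.add_apply, LinearMap.neg_apply] at hprod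
    rw [hN (nabla X Y) Z (hns X Y hX hY) hZ p (U p), hN Y (nabla X Z) hY (hns X Z hX hZ) p (U p),
      hN Y Z hY hZ p (nabla X U p), ha p (Rt Y Z X p) (U p)] at hprod
    linarith
  -- ===== conclusion: the curvature tensor is parallel =====
  intro X Y Z W hX hY hZ hW p
  have hfin : ∀ u : E, g p (nabla X (fun q => Rt Y Z W q) p - Rt (nabla X Y) Z W p
      - Rt Y (nabla X Z) W p - Rt Y Z (nabla X W) p) u = 0 := by
    intro u
    set U : E → E := fun _ => u with hUdef
    have hUs : ContDiff ℝ (⊤:ℕ∞) U := contDiff_const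
    have hfun : (fun q => g q (Rt Y Z W q) (U q)) = fun q => B (II Y Z q) (II W U q) :=
      funext fun q => hGauss W Y Z U hW hY hZ hUs q
    have hL := hmetric X (fun q => Rt Y Z W q) U hX (sRt Y Z W hY hZ hW) hUs p
    rw [hfun] at hL
    rw [fderiv_B B (cdiff (sII Y Z hY hZ) p) (cdiff (sII W U hW hUs) p) (X p)] at hL
    have hD1 : fderiv ℝ (fun q => II Y Z q) p (X p)
        = - Ω p (Rt Y Z X p) + II (nabla X Y) Z p + II Y (nabla X Z) p := by
      have h := hE3 X Y Z hX hY hZ p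
      simp only [covD] at h
      linear_combination (norm := module) h
    have hD2 : fderiv ℝ (fun q => II W U q) p (X p)
        = - Ω p (Rt W U X p) + II (nabla X W) U p + II W (nabla X U) p := by
      have h := hE3 X W U hX hW hUs p
      simp only [covD] at h
      linear_combination (norm := module) h
    rw [hD1, hD2] at hL
    simp only [map_add, map_neg, LinearMap.add_apply, LinearMap.neg_apply] at hL
    have o1 : B (Ω p (Rt Y Z X p)) (II W U p) = 0 := by
      rw [hBsymm]
      exact hN W U hW hUs p (Rt Y Z X p)
    have o2 : B (II Y Z p) (Ω p (Rt W U X p)) = 0 := hN Y Z hY hZ p (Rt W U X p)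
    rw [o1, o2] at hL
    rw [← hGauss W (nabla X Y) Z U hW (hns X Y hX hY) hZ hUs p,
      ← hGauss W Y (nabla X Z) U hW hY (hns X Z hX hZ) hUs p,
      ← hGauss (nabla X W) Y Z U (hns X W hX hW) hY hZ hUs p,
      ← hGauss W Y Z (nabla X U) hW hY hZ (hns X U hX hUs) p] at hL
    have hUp : U p = u := rfl
    rw [hUp] at hL
    simp only [map_sub, LinearMap.sub_apply]
    linarith
  set v : E := nabla X (fun q => Rt Y Z W q) p - Rt (nabla X Y) Z W p
      - Rt Y (nabla X Z) W p - Rt Y Z (nabla X W) p with hv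
  by_contra hne
  exact (hgpos p v hne).ne' (hfin v)
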